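/- There exists a constant C = C(α) such that for all k₁, k₂, k₃ ∈ ℤ, all j₁, j₂, j₃ ∈ ℤ_{≥0}, and all functions f_i ∈ L²(ℝ²) (i = 1,2,3) with f_i supported in U_{k_i} × J_{j_i}, one has |J(f₁, f₂, f₃)| ≤ C · min(|U_{k₁}|, |U_{k₂}|, |U_{k₃}|)^{1/2} · 2^{min(j₁,j₂,j₃)/2} · ‖f₁‖_{L²} ‖f₂‖_{L²} ‖f₃‖_{L²}. -/

import Mathlib

open MeasureTheory Set
open scoped ENNReal

noncomputable section

/-- The sequence `n₀ = 0`, `n₁ = 4`, `n_{k+1} = n_k + n_k^{1/2}` for `k ≥ 1`. -/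
def nseq : ℕ → ℝ
  | 0 => 0
  | 1 => 4
  | k + 2 => nseq (k + 1) + Real.sqrt (nseq (k + 1))

/-- Extension of `nseq` to `ℤ` by `n_{-k} = -n_k`. -/
def nZ : ℤ → ℝ := fun k => if 0 ≤ k then nseq k.toNat else -nseq (-k).toNat

/-- The dispersion relation `ω(ξ) = -ξ|ξ|^α`. -/
def omega (α ξ : ℝ) : ℝ := -ξ * |ξ| ^ α

/-- The resonance function `Ω(ξ₁,ξ₂) = -ω(ξ₁+ξ₂) + ω(ξ₁) + ω(ξ₂)`. -/
def Omega (α ξ₁ ξ₂ : ℝ) : ℝ := -omega α (ξ₁ + ξ₂) + omega α ξ₁ + omega α ξ₂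

/-- The frequency sets `U_k`. -/
def Uset (k : ℤ) : Set ℝ :=
  if 1 ≤ k then
    {ν : ℝ | |ν| ∈ Set.Icc ((5 * nZ (k - 1) + nZ k) / 6) ((5 * nZ (k + 1) + nZ k) / 6)}
  else {ν : ℝ | |ν| ∈ Set.Icc ((2 : ℝ) ^ (k + 1)) ((2 : ℝ) ^ (k + 3))}

/-- The modulation sets `J_j`: `J₀ = [-2,2]` and `J_j = {|ν| ∈ [2^{j-1}, 2^{j+1}]}`. -/
def Jset : ℕ → Set ℝ
  | 0 => Set.Icc (-2) 2
  | j + 1 => {ν : ℝ | |ν| ∈ Set.Icc ((2 : ℝ) ^ j) ((2 : ℝ) ^ (j + 2))}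

/-- The trilinear form
`J(f,g,h) = ∫ f(ξ₁,μ₁) g(ξ₂,μ₂) h(ξ₁+ξ₂, μ₁+μ₂+Ω(ξ₁,ξ₂))`. -/
def Jnt (α : ℝ) (f g h : ℝ × ℝ → ℂ) : ℂ :=
  ∫ p : (ℝ × ℝ) × (ℝ × ℝ),
    f p.1 * g p.2 * h (p.1.1 + p.2.1, p.1.2 + p.2.2 + Omega α p.1.1 p.2.1)

/-- The `L²(ℝ²)` norm, as a real number. -/
def L2N (f : ℝ × ℝ → ℂ) : ℝ := (eLpNorm f 2 volume).toReal

/-- `d_α(k₁,k₂;k₃) = inf { ||ξ₁|^α - |ξ₂|^α| : ξ₁ ∈ U_{k₁}, ξ₂ ∈ U_{k₂}, ξ₁+ξ₂ ∈ U_{k₃} }`. -/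
def dalpha (α : ℝ) (k₁ k₂ k₃ : ℤ) : ℝ :=
  sInf ((fun p : ℝ × ℝ => |(|p.1| ^ α) - (|p.2| ^ α)|) ''
    {p : ℝ × ℝ | p.1 ∈ Uset k₁ ∧ p.2 ∈ Uset k₂ ∧ p.1 + p.2 ∈ Uset k₃})

/-- Convolution on `ℝ²`. -/
def conv2 (f g : ℝ × ℝ → ℂ) : ℝ × ℝ → ℂ :=
  fun q => ∫ p : ℝ × ℝ, f p * g (q.1 - p.1, q.2 - p.2)

/-- The sets `V_k^j = {(ξ,τ) : ξ ∈ U_k, τ - ω(ξ) ∈ J_j}`. -/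
def Vset (α : ℝ) (k : ℤ) (j : ℕ) : Set (ℝ × ℝ) :=
  {q : ℝ × ℝ | q.1 ∈ Uset k ∧ q.2 - omega α q.1 ∈ Jset j}

/-- The median of three natural numbers. -/
def med3 (a b c : ℕ) : ℕ := a + b + c - max (max a b) c - min (min a b) c

/-! ### Auxiliary lemmas for `statement8` -/

section Statement8Aux

open Function

/-- The shear map `σ`. -/
def sgMap (α : ℝ) (p q : ℝ × ℝ) : ℝ × ℝ := (p.1 + q.1, p.2 + q.2 + Omega α p.1 q.1)

/-- The inverse shear map `τ`. -/
def tgMap (α : ℝ) (p q : ℝ × ℝ) : ℝ × ℝ :=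
  (p.1 - q.1, p.2 - q.2 - Omega α (p.1 - q.1) q.1)

variable {α : ℝ}

lemma measurable_omega' (hα : 0 ≤ α) : Measurable (omega α) := by
  unfold omega
  exact (measurable_id.neg).mul
    ((continuous_abs.rpow_const (fun x => Or.inr hα)).measurable)

lemma measurable_Omega2 (hα : 0 ≤ α) :
    Measurable (fun p : ℝ × ℝ => Omega α p.1 p.2) := by
  unfold Omega
  have h := measurable_omega' hα
  exact (((h.comp (measurable_fst.add measurable_snd)).neg).add
    (h.comp measurable_fst)).add (h.comp measurable_snd)

lemma measurable_sgMap (hα : 0 ≤ α) :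
    Measurable (fun z : (ℝ × ℝ) × (ℝ × ℝ) => sgMap α z.1 z.2) := by
  unfold sgMap
  refine Measurable.prodMk ?_ ?_
  · exact (measurable_fst.fst).add (measurable_snd.fst)
  · exact ((measurable_fst.snd).add (measurable_snd.snd)).add
      ((measurable_Omega2 hα).comp ((measurable_fst.fst).prodMk (measurable_snd.fst)))

lemma measurable_tgMap (hα : 0 ≤ α) :
    Measurable (fun z : (ℝ × ℝ) × (ℝ × ℝ) => tgMap α z.1 z.2) := by
  unfold tgMap
  refine Measurable.prodMk ?_ ?_
  · exact (measurable_fst.fst).sub (measurable_snd.fst)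
  · exact ((measurable_fst.snd).sub (measurable_snd.snd)).sub
      ((measurable_Omega2 hα).comp
        (((measurable_fst.fst).sub (measurable_snd.fst)).prodMk (measurable_snd.fst)))

lemma Omega_comm (a b : ℝ) : Omega α a b = Omega α b a := by
  unfold Omega
  rw [add_comm a b]; ring

lemma sg_tg (p q : ℝ × ℝ) : sgMap α (tgMap α p q) q = p := by
  unfold sgMap tgMap
  ext <;> simp <;> ring

lemma tg_sg (p q : ℝ × ℝ) : tgMap α (sgMap α p q) q = p := by
  unfold sgMap tgMap
  have h1 : p.1 + q.1 - q.1 = p.1 := by ring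
  ext <;> simp [h1] <;> ring

lemma sg_comm (p q : ℝ × ℝ) : sgMap α p q = sgMap α q p := by
  unfold sgMap
  rw [Omega_comm]
  ext <;> simp <;> ring

/-- Shear invariance of `lintegral` on `ℝ²`. -/
lemma lintegral_shear (W : ℝ × ℝ → ℝ≥0∞) (hW : Measurable W) (a : ℝ)
    (φ : ℝ → ℝ) (hφ : Measurable φ) :
    ∫⁻ p : ℝ × ℝ, W (p.1 + a, p.2 + φ p.1) = ∫⁻ p, W p := by
  have hmap : Measurable (fun z : ℝ × ℝ => ((z.1 + a, z.2 + φ z.1) : ℝ × ℝ)) :=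
    ((measurable_fst.add_const a).prodMk
      (measurable_snd.add (hφ.comp measurable_fst)))
  calc ∫⁻ p : ℝ × ℝ, W (p.1 + a, p.2 + φ p.1)
      = ∫⁻ x, ∫⁻ y, W (x + a, y + φ x) := by
        rw [Measure.volume_eq_prod]
        exact lintegral_prod _ (hW.comp hmap).aemeasurable
    _ = ∫⁻ x, ∫⁻ y, W (x + a, y) :=
        lintegral_congr fun x => lintegral_add_right_eq_self (fun y => W (x + a, y)) (φ x)
    _ = ∫⁻ x, ∫⁻ y, W (x, y) :=
        lintegral_add_right_eq_self (fun x => ∫⁻ y, W (x, y)) a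
    _ = ∫⁻ p, W p := by
        rw [Measure.volume_eq_prod]
        exact (lintegral_prod _ hW.aemeasurable).symm

lemma lintegral_shear_sg (hα : 0 ≤ α) (q : ℝ × ℝ) (Φ : ℝ × ℝ → ℝ≥0∞)
    (hΦ : Measurable Φ) : ∫⁻ p, Φ (sgMap α p q) = ∫⁻ p, Φ p := by
  have h : ∀ p : ℝ × ℝ, sgMap α p q =
      (p.1 + q.1, p.2 + (fun x => q.2 + Omega α x q.1) p.1) := by
    intro p; unfold sgMap; ext <;> simp <;> ring
  rw [lintegral_congr fun p => congrArg Φ (h p)]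
  exact lintegral_shear Φ hΦ q.1 _
    (measurable_const.add ((measurable_Omega2 hα).comp (measurable_id.prodMk measurable_const)))

lemma lintegral_shear_tg (hα : 0 ≤ α) (q : ℝ × ℝ) (Φ : ℝ × ℝ → ℝ≥0∞)
    (hΦ : Measurable Φ) : ∫⁻ p, Φ (tgMap α p q) = ∫⁻ p, Φ p := by
  have h : ∀ p : ℝ × ℝ, tgMap α p q =
      (p.1 + (-q.1), p.2 + (fun x => -(q.2 + Omega α (x + -q.1) q.1)) p.1) := by
    intro p; unfold tgMap; ext <;> simp <;> ring_nf
  rw [lintegral_congr fun p => congrArg Φ (h p)]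
  exact lintegral_shear Φ hΦ (-q.1) _
    ((measurable_const.add ((measurable_Omega2 hα).comp
      ((measurable_id.add_const (-q.1)).prodMk measurable_const))).neg)

end Statement8Aux
section Statement8Aux2

open Function

variable {α : ℝ}

lemma ind_le_one (s : Set ℝ) (x : ℝ) : s.indicator (1 : ℝ → ℝ≥0∞) x ≤ 1 := by
  by_cases h : x ∈ s <;> simp [Set.indicator_apply, h]

lemma indProd (A B : Set ℝ) (x : ℝ × ℝ) :
    (A ×ˢ B).indicator (1 : ℝ × ℝ → ℝ≥0∞) x =
      A.indicator 1 x.1 * B.indicator 1 x.2 := by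
  by_cases h1 : x.1 ∈ A <;> by_cases h2 : x.2 ∈ B <;>
    simp [Set.indicator_apply, Set.mem_prod, h1, h2]

lemma lint_ind_add (A : Set ℝ) (hA : MeasurableSet A) (c : ℝ) :
    ∫⁻ t : ℝ, A.indicator (1 : ℝ → ℝ≥0∞) (c + t) = volume A := by
  rw [lintegral_add_left_eq_self (A.indicator (1 : ℝ → ℝ≥0∞)) c,
    lintegral_indicator_one hA]

lemma lint_ind_sub (A : Set ℝ) (hA : MeasurableSet A) (c : ℝ) :
    ∫⁻ t : ℝ, A.indicator (1 : ℝ → ℝ≥0∞) (c - t) = volume A := by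
  have hmp : MeasurePreserving (fun t : ℝ => c + (-t)) volume volume :=
    (measurePreserving_add_left volume c).comp (Measure.measurePreserving_neg volume)
  have h := hmp.lintegral_comp (f := A.indicator (1 : ℝ → ℝ≥0∞))
    (measurable_one.indicator hA)
  simp_rw [← sub_eq_add_neg] at h
  rw [← lintegral_indicator_one hA]
  exact h

lemma prodind (A B : Set ℝ) (hA : MeasurableSet A) (hB : MeasurableSet B)
    (m : ℝ → ℝ) (hval : ∫⁻ t : ℝ, A.indicator (1 : ℝ → ℝ≥0∞) (m t) = volume A) :
    ∫⁻ t : ℝ, A.indicator (1 : ℝ → ℝ≥0∞) (m t) * B.indicator 1 t ≤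
      min (volume A) (volume B) := by
  refine le_min ?_ ?_
  · calc ∫⁻ t : ℝ, A.indicator (1 : ℝ → ℝ≥0∞) (m t) * B.indicator 1 t
        ≤ ∫⁻ t : ℝ, A.indicator (1 : ℝ → ℝ≥0∞) (m t) := by
          refine lintegral_mono fun t => ?_
          calc A.indicator (1 : ℝ → ℝ≥0∞) (m t) * B.indicator 1 t
              ≤ A.indicator (1 : ℝ → ℝ≥0∞) (m t) * 1 :=
                mul_le_mul_right (ind_le_one _ _) _
            _ = A.indicator (1 : ℝ → ℝ≥0∞) (m t) := mul_one _
      _ = volume A := hval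
  · calc ∫⁻ t : ℝ, A.indicator (1 : ℝ → ℝ≥0∞) (m t) * B.indicator 1 t
        ≤ ∫⁻ t : ℝ, B.indicator (1 : ℝ → ℝ≥0∞) t := by
          refine lintegral_mono fun t => ?_
          calc A.indicator (1 : ℝ → ℝ≥0∞) (m t) * B.indicator 1 t
              ≤ 1 * B.indicator 1 t := mul_le_mul_left (ind_le_one _ _) _
            _ = B.indicator 1 t := one_mul _
      _ = volume B := lintegral_indicator_one hB

lemma Qsub (A B C D : Set ℝ) (hA : MeasurableSet A) (hB : MeasurableSet B)
    (hC : MeasurableSet C) (hD : MeasurableSet D) (x y : ℝ)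
    (θ : ℝ → ℝ) (hθ : Measurable θ) :
    ∫⁻ q : ℝ × ℝ, A.indicator (1 : ℝ → ℝ≥0∞) (x - q.1) *
        B.indicator 1 (y - q.2 - θ q.1) * (C.indicator 1 q.1 * D.indicator 1 q.2) ≤
      min (volume A) (volume C) * min (volume B) (volume D) := by
  have hmeas : Measurable fun q : ℝ × ℝ =>
      A.indicator (1 : ℝ → ℝ≥0∞) (x - q.1) * B.indicator 1 (y - q.2 - θ q.1) *
        (C.indicator 1 q.1 * D.indicator 1 q.2) := by
    refine Measurable.mul (Measurable.mul ?_ ?_) (Measurable.mul ?_ ?_)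
    · exact (measurable_one.indicator hA).comp (measurable_const.sub measurable_fst)
    · exact (measurable_one.indicator hB).comp
        ((measurable_const.sub measurable_snd).sub (hθ.comp measurable_fst))
    · exact (measurable_one.indicator hC).comp measurable_fst
    · exact (measurable_one.indicator hD).comp measurable_snd
  rw [Measure.volume_eq_prod]
  rw [lintegral_prod _ hmeas.aemeasurable]
  calc ∫⁻ s : ℝ, ∫⁻ t : ℝ, A.indicator (1 : ℝ → ℝ≥0∞) (x - s) *
          B.indicator 1 (y - t - θ s) * (C.indicator 1 s * D.indicator 1 t)
      = ∫⁻ s : ℝ, (A.indicator (1 : ℝ → ℝ≥0∞) (x - s) * C.indicator 1 s) *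
          ∫⁻ t : ℝ, B.indicator (1 : ℝ → ℝ≥0∞) ((y - θ s) - t) * D.indicator 1 t := by
        refine lintegral_congr fun s => ?_
        rw [← lintegral_const_mul _ ?meas]
        case meas =>
          exact ((measurable_one.indicator hB).comp
            (measurable_const.sub measurable_id)).mul
            ((measurable_one.indicator hD).comp measurable_id)
        refine lintegral_congr fun t => ?_
        have : y - t - θ s = (y - θ s) - t := by ring
        rw [this]; ring
    _ ≤ ∫⁻ s : ℝ, (A.indicator (1 : ℝ → ℝ≥0∞) (x - s) * C.indicator 1 s) *
          (min (volume B) (volume D)) := by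
        refine lintegral_mono fun s => ?_
        exact mul_le_mul_right (prodind B D hB hD _ (lint_ind_sub B hB _)) _
    _ = (∫⁻ s : ℝ, A.indicator (1 : ℝ → ℝ≥0∞) (x - s) * C.indicator 1 s) *
          (min (volume B) (volume D)) := by
        rw [lintegral_mul_const]
        exact ((measurable_one.indicator hA).comp
          (measurable_const.sub measurable_id)).mul
          ((measurable_one.indicator hC).comp measurable_id)
    _ ≤ min (volume A) (volume C) * min (volume B) (volume D) :=
        mul_le_mul_left (prodind A C hA hC _ (lint_ind_sub A hA _)) _

lemma Qadd (A B C D : Set ℝ) (hA : MeasurableSet A) (hB : MeasurableSet B)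
    (hC : MeasurableSet C) (hD : MeasurableSet D) (x y : ℝ)
    (θ : ℝ → ℝ) (hθ : Measurable θ) :
    ∫⁻ q : ℝ × ℝ, A.indicator (1 : ℝ → ℝ≥0∞) (x + q.1) *
        B.indicator 1 (y + q.2 + θ q.1) * (C.indicator 1 q.1 * D.indicator 1 q.2) ≤
      min (volume A) (volume C) * min (volume B) (volume D) := by
  have hmeas : Measurable fun q : ℝ × ℝ =>
      A.indicator (1 : ℝ → ℝ≥0∞) (x + q.1) * B.indicator 1 (y + q.2 + θ q.1) *
        (C.indicator 1 q.1 * D.indicator 1 q.2) := by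
    refine Measurable.mul (Measurable.mul ?_ ?_) (Measurable.mul ?_ ?_)
    · exact (measurable_one.indicator hA).comp (measurable_const.add measurable_fst)
    · exact (measurable_one.indicator hB).comp
        ((measurable_const.add measurable_snd).add (hθ.comp measurable_fst))
    · exact (measurable_one.indicator hC).comp measurable_fst
    · exact (measurable_one.indicator hD).comp measurable_snd
  rw [Measure.volume_eq_prod]
  rw [lintegral_prod _ hmeas.aemeasurable]
  calc ∫⁻ s : ℝ, ∫⁻ t : ℝ, A.indicator (1 : ℝ → ℝ≥0∞) (x + s) *
          B.indicator 1 (y + t + θ s) * (C.indicator 1 s * D.indicator 1 t)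
      = ∫⁻ s : ℝ, (A.indicator (1 : ℝ → ℝ≥0∞) (x + s) * C.indicator 1 s) *
          ∫⁻ t : ℝ, B.indicator (1 : ℝ → ℝ≥0∞) ((y + θ s) + t) * D.indicator 1 t := by
        refine lintegral_congr fun s => ?_
        rw [← lintegral_const_mul _ ?meas]
        case meas =>
          exact ((measurable_one.indicator hB).comp
            (measurable_const.add measurable_id)).mul
            ((measurable_one.indicator hD).comp measurable_id)
        refine lintegral_congr fun t => ?_
        have : y + t + θ s = (y + θ s) + t := by ring
        rw [this]; ring
    _ ≤ ∫⁻ s : ℝ, (A.indicator (1 : ℝ → ℝ≥0∞) (x + s) * C.indicator 1 s) *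
          (min (volume B) (volume D)) := by
        refine lintegral_mono fun s => ?_
        exact mul_le_mul_right (prodind B D hB hD _ (lint_ind_add B hB _)) _
    _ = (∫⁻ s : ℝ, A.indicator (1 : ℝ → ℝ≥0∞) (x + s) * C.indicator 1 s) *
          (min (volume B) (volume D)) := by
        rw [lintegral_mul_const]
        exact ((measurable_one.indicator hA).comp
          (measurable_const.add measurable_id)).mul
          ((measurable_one.indicator hC).comp measurable_id)
    _ ≤ min (volume A) (volume C) * min (volume B) (volume D) :=
        mul_le_mul_left (prodind A C hA hC _ (lint_ind_add A hA _)) _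

end Statement8Aux2
section Statement8Aux3

open Function

lemma ind_rpow_two {β : Type*} (s : Set β) (x : β) :
    (s.indicator (1 : β → ℝ≥0∞) x) ^ (2 : ℝ) = s.indicator 1 x := by
  by_cases h : x ∈ s <;>
    simp [Set.indicator_apply, h, ENNReal.zero_rpow_of_pos (by norm_num : (0:ℝ) < 2)]

lemma combine_rpow (a b c m : ℝ≥0∞) :
    (a * b) ^ (1 / 2 : ℝ) * (m * c) ^ (1 / 2 : ℝ) =
      (a * b * c) ^ (1 / 2 : ℝ) * m ^ (1 / 2 : ℝ) := by
  rw [ENNReal.mul_rpow_of_nonneg m c (by norm_num : (0:ℝ) ≤ 1/2),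
    ENNReal.mul_rpow_of_nonneg (a * b) c (by norm_num : (0:ℝ) ≤ 1/2)]
  ring

lemma main_est (F G H : ℝ × ℝ → ℝ≥0∞) (hF : Measurable F) (hG : Measurable G)
    (hH : Measurable H)
    (A B C D : Set ℝ) (hA : MeasurableSet A) (hB : MeasurableSet B)
    (hC : MeasurableSet C) (hD : MeasurableSet D)
    (hFs : ∀ p : ℝ × ℝ, F p ≠ 0 → p.1 ∈ A ∧ p.2 ∈ B)
    (hGs : ∀ q : ℝ × ℝ, G q ≠ 0 → q.1 ∈ C ∧ q.2 ∈ D)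
    (R E : ℝ × ℝ → ℝ × ℝ → ℝ × ℝ)
    (hRm : Measurable fun z : (ℝ × ℝ) × (ℝ × ℝ) => R z.1 z.2)
    (hEm : Measurable fun z : (ℝ × ℝ) × (ℝ × ℝ) => E z.1 z.2)
    (hER : ∀ p q, E (R p q) q = p)
    (hshear : ∀ (q : ℝ × ℝ) (Φ : ℝ × ℝ → ℝ≥0∞), Measurable Φ →
      ∫⁻ p, Φ (R p q) = ∫⁻ p, Φ p)
    (hQ : ∀ p : ℝ × ℝ,
      ∫⁻ q : ℝ × ℝ, (A ×ˢ B).indicator (1 : ℝ × ℝ → ℝ≥0∞) (E p q) *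
          (C ×ˢ D).indicator 1 q ≤
        min (volume A) (volume C) * min (volume B) (volume D)) :
    ∫⁻ z : (ℝ × ℝ) × (ℝ × ℝ), F z.1 * G z.2 * H (R z.1 z.2) ≤
      ((∫⁻ p, F p ^ (2 : ℝ)) * (∫⁻ p, G p ^ (2 : ℝ)) * (∫⁻ p, H p ^ (2 : ℝ))) ^
          (1 / 2 : ℝ) *
        (min (volume A) (volume C) * min (volume B) (volume D)) ^ (1 / 2 : ℝ) := by
  have hSAB : MeasurableSet (A ×ˢ B) := hA.prod hB
  have hSCD : MeasurableSet (C ×ˢ D) := hC.prod hD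
  set M := min (volume A) (volume C) * min (volume B) (volume D) with hM
  set Φ : (ℝ × ℝ) × (ℝ × ℝ) → ℝ≥0∞ := fun z => F z.1 * G z.2 with hΦ
  set Ψ : (ℝ × ℝ) × (ℝ × ℝ) → ℝ≥0∞ := fun z =>
    (A ×ˢ B).indicator 1 z.1 * (C ×ˢ D).indicator 1 z.2 * H (R z.1 z.2) with hΨ
  have hΦm : Measurable Φ := (hF.comp measurable_fst).mul (hG.comp measurable_snd)
  have hΨm : Measurable Ψ :=
    (((measurable_one.indicator hSAB).comp measurable_fst).mul
      ((measurable_one.indicator hSCD).comp measurable_snd)).mul (hH.comp hRm)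
  have hH2 : Measurable fun p : ℝ × ℝ => H p ^ (2 : ℝ) := hH.pow_const _
  have step1 : ∀ z : (ℝ × ℝ) × (ℝ × ℝ),
      F z.1 * G z.2 * H (R z.1 z.2) = Φ z * Ψ z := by
    intro z
    by_cases h1 : F z.1 = 0
    · simp [hΦ, hΨ, h1]
    by_cases h2 : G z.2 = 0
    · simp [hΦ, hΨ, h2]
    have m1 : z.1 ∈ A ×ˢ B := Set.mem_prod.mpr ⟨(hFs _ h1).1, (hFs _ h1).2⟩
    have m2 : z.2 ∈ C ×ˢ D := Set.mem_prod.mpr ⟨(hGs _ h2).1, (hGs _ h2).2⟩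
    simp only [hΦ, hΨ, Set.indicator_of_mem m1, Set.indicator_of_mem m2, Pi.one_apply]
    ring
  have hNFG : ∫⁻ z : (ℝ × ℝ) × (ℝ × ℝ), Φ z ^ (2 : ℝ) =
      (∫⁻ p, F p ^ (2 : ℝ)) * (∫⁻ p, G p ^ (2 : ℝ)) := by
    have e : ∀ z : (ℝ × ℝ) × (ℝ × ℝ), Φ z ^ (2 : ℝ) =
        F z.1 ^ (2 : ℝ) * G z.2 ^ (2 : ℝ) := fun z =>
      ENNReal.mul_rpow_of_nonneg _ _ (by norm_num)
    rw [lintegral_congr e, Measure.volume_eq_prod]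
    exact lintegral_prod_mul (hF.pow_const _).aemeasurable (hG.pow_const _).aemeasurable
  have hk1 : Measurable fun z : (ℝ × ℝ) × (ℝ × ℝ) =>
      (A ×ˢ B).indicator (1 : ℝ × ℝ → ℝ≥0∞) z.1 * (C ×ˢ D).indicator 1 z.2 *
        H (R z.1 z.2) ^ (2 : ℝ) :=
    (((measurable_one.indicator hSAB).comp measurable_fst).mul
      ((measurable_one.indicator hSCD).comp measurable_snd)).mul (hH2.comp hRm)
  have hk2 : Measurable fun z : (ℝ × ℝ) × (ℝ × ℝ) =>
      (A ×ˢ B).indicator (1 : ℝ × ℝ → ℝ≥0∞) (E z.2 z.1) * (C ×ˢ D).indicator 1 z.1 *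
        H z.2 ^ (2 : ℝ) :=
    (((measurable_one.indicator hSAB).comp (hEm.comp measurable_swap)).mul
      ((measurable_one.indicator hSCD).comp measurable_fst)).mul (hH2.comp measurable_snd)
  have hK : ∫⁻ z : (ℝ × ℝ) × (ℝ × ℝ), Ψ z ^ (2 : ℝ) ≤ M * ∫⁻ p, H p ^ (2 : ℝ) := by
    have e : ∀ z : (ℝ × ℝ) × (ℝ × ℝ), Ψ z ^ (2 : ℝ) =
        (A ×ˢ B).indicator 1 z.1 * (C ×ˢ D).indicator 1 z.2 *
          H (R z.1 z.2) ^ (2 : ℝ) := by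
      intro z
      simp only [hΨ]
      rw [ENNReal.mul_rpow_of_nonneg _ _ (by norm_num : (0:ℝ) ≤ 2),
        ENNReal.mul_rpow_of_nonneg _ _ (by norm_num : (0:ℝ) ≤ 2),
        ind_rpow_two, ind_rpow_two]
    calc ∫⁻ z : (ℝ × ℝ) × (ℝ × ℝ), Ψ z ^ (2 : ℝ)
        = ∫⁻ z : (ℝ × ℝ) × (ℝ × ℝ), (A ×ˢ B).indicator 1 z.1 *
            (C ×ˢ D).indicator 1 z.2 * H (R z.1 z.2) ^ (2 : ℝ) := lintegral_congr e
      _ = ∫⁻ p : ℝ × ℝ, ∫⁻ q : ℝ × ℝ, (A ×ˢ B).indicator 1 p *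
            (C ×ˢ D).indicator 1 q * H (R p q) ^ (2 : ℝ) := by
          rw [Measure.volume_eq_prod]; exact lintegral_prod _ hk1.aemeasurable
      _ = ∫⁻ q : ℝ × ℝ, ∫⁻ p : ℝ × ℝ, (A ×ˢ B).indicator 1 p *
            (C ×ˢ D).indicator 1 q * H (R p q) ^ (2 : ℝ) :=
          lintegral_lintegral_swap hk1.aemeasurable
      _ = ∫⁻ q : ℝ × ℝ, ∫⁻ p : ℝ × ℝ, (A ×ˢ B).indicator 1 (E p q) *
            (C ×ˢ D).indicator 1 q * H p ^ (2 : ℝ) := by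
          refine lintegral_congr fun q => ?_
          have hΦq : Measurable fun p : ℝ × ℝ =>
              (A ×ˢ B).indicator (1 : ℝ × ℝ → ℝ≥0∞) (E p q) *
                (C ×ˢ D).indicator 1 q * H p ^ (2 : ℝ) := by
            refine Measurable.mul (Measurable.mul ?_ measurable_const) hH2
            exact (measurable_one.indicator hSAB).comp
              (hEm.comp (measurable_id.prodMk measurable_const))
          calc ∫⁻ p : ℝ × ℝ, (A ×ˢ B).indicator 1 p * (C ×ˢ D).indicator 1 q *
                H (R p q) ^ (2 : ℝ)
              = ∫⁻ p : ℝ × ℝ, (fun p' : ℝ × ℝ => (A ×ˢ B).indicator 1 (E p' q) *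
                  (C ×ˢ D).indicator 1 q * H p' ^ (2 : ℝ)) (R p q) := by
                refine lintegral_congr fun p => ?_
                simp only [hER p q]
            _ = ∫⁻ p : ℝ × ℝ, (A ×ˢ B).indicator 1 (E p q) *
                  (C ×ˢ D).indicator 1 q * H p ^ (2 : ℝ) := hshear q _ hΦq
      _ = ∫⁻ p : ℝ × ℝ, ∫⁻ q : ℝ × ℝ, (A ×ˢ B).indicator 1 (E p q) *
            (C ×ˢ D).indicator 1 q * H p ^ (2 : ℝ) :=
          lintegral_lintegral_swap hk2.aemeasurable
      _ = ∫⁻ p : ℝ × ℝ, (∫⁻ q : ℝ × ℝ, (A ×ˢ B).indicator 1 (E p q) *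
            (C ×ˢ D).indicator 1 q) * H p ^ (2 : ℝ) := by
          refine lintegral_congr fun p => ?_
          exact lintegral_mul_const (H p ^ (2 : ℝ))
            (((measurable_one.indicator hSAB).comp
              (hEm.comp (measurable_const.prodMk measurable_id))).mul
              (measurable_one.indicator hSCD))
      _ ≤ ∫⁻ p : ℝ × ℝ, M * H p ^ (2 : ℝ) :=
          lintegral_mono fun p => mul_le_mul_left (hQ p) _
      _ = M * ∫⁻ p, H p ^ (2 : ℝ) := lintegral_const_mul M hH2
  calc ∫⁻ z : (ℝ × ℝ) × (ℝ × ℝ), F z.1 * G z.2 * H (R z.1 z.2)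
      = ∫⁻ z, Φ z * Ψ z := lintegral_congr step1
    _ ≤ (∫⁻ z, Φ z ^ (2 : ℝ)) ^ (1 / 2 : ℝ) * (∫⁻ z, Ψ z ^ (2 : ℝ)) ^ (1 / 2 : ℝ) := by
        have h2 : (2 : ℝ).HolderConjugate 2 := ⟨by norm_num, by norm_num, by norm_num⟩
        simpa using ENNReal.lintegral_mul_le_Lp_mul_Lq volume h2
          hΦm.aemeasurable hΨm.aemeasurable
    _ ≤ ((∫⁻ p, F p ^ (2 : ℝ)) * (∫⁻ p, G p ^ (2 : ℝ))) ^ (1 / 2 : ℝ) *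
          (M * ∫⁻ p, H p ^ (2 : ℝ)) ^ (1 / 2 : ℝ) := by
        rw [hNFG]
        exact mul_le_mul_right (ENNReal.rpow_le_rpow hK (by norm_num)) _
    _ = ((∫⁻ p, F p ^ (2 : ℝ)) * (∫⁻ p, G p ^ (2 : ℝ)) * (∫⁻ p, H p ^ (2 : ℝ))) ^
          (1 / 2 : ℝ) * M ^ (1 / 2 : ℝ) := combine_rpow _ _ _ _

end Statement8Aux3
section Statement8Aux4

open Function

variable {α : ℝ}

lemma L_transform (hα : 0 ≤ α) (F G H : ℝ × ℝ → ℝ≥0∞) (hF : Measurable F)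
    (hG : Measurable G) (hH : Measurable H) :
    ∫⁻ z : (ℝ × ℝ) × (ℝ × ℝ), F z.1 * G z.2 * H (sgMap α z.1 z.2) =
      ∫⁻ z : (ℝ × ℝ) × (ℝ × ℝ), H z.1 * G z.2 * F (tgMap α z.1 z.2) := by
  have hint1 : Measurable fun z : (ℝ × ℝ) × (ℝ × ℝ) =>
      F z.1 * G z.2 * H (sgMap α z.1 z.2) :=
    ((hF.comp measurable_fst).mul (hG.comp measurable_snd)).mul
      (hH.comp (measurable_sgMap hα))
  have hint2 : Measurable fun z : (ℝ × ℝ) × (ℝ × ℝ) =>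
      F (tgMap α z.2 z.1) * G z.1 * H z.2 :=
    ((hF.comp ((measurable_tgMap hα).comp measurable_swap)).mul
      (hG.comp measurable_fst)).mul (hH.comp measurable_snd)
  calc ∫⁻ z : (ℝ × ℝ) × (ℝ × ℝ), F z.1 * G z.2 * H (sgMap α z.1 z.2)
      = ∫⁻ p : ℝ × ℝ, ∫⁻ q : ℝ × ℝ, F p * G q * H (sgMap α p q) := by
        rw [Measure.volume_eq_prod]; exact lintegral_prod _ hint1.aemeasurable
    _ = ∫⁻ q : ℝ × ℝ, ∫⁻ p : ℝ × ℝ, F p * G q * H (sgMap α p q) :=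
        lintegral_lintegral_swap hint1.aemeasurable
    _ = ∫⁻ q : ℝ × ℝ, ∫⁻ p : ℝ × ℝ, F (tgMap α p q) * G q * H p := by
        refine lintegral_congr fun q => ?_
        have hΦ : Measurable fun p : ℝ × ℝ => F (tgMap α p q) * G q * H p :=
          ((hF.comp ((measurable_tgMap hα).comp
            (measurable_id.prodMk measurable_const))).mul measurable_const).mul hH
        calc ∫⁻ p : ℝ × ℝ, F p * G q * H (sgMap α p q)
            = ∫⁻ p : ℝ × ℝ, (fun p' : ℝ × ℝ =>
                F (tgMap α p' q) * G q * H p') (sgMap α p q) := by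
              refine lintegral_congr fun p => ?_
              simp only [tg_sg]
          _ = ∫⁻ p : ℝ × ℝ, F (tgMap α p q) * G q * H p :=
              lintegral_shear_sg hα q _ hΦ
    _ = ∫⁻ p : ℝ × ℝ, ∫⁻ q : ℝ × ℝ, F (tgMap α p q) * G q * H p :=
        lintegral_lintegral_swap hint2.aemeasurable
    _ = ∫⁻ z : (ℝ × ℝ) × (ℝ × ℝ), F (tgMap α z.1 z.2) * G z.2 * H z.1 := by
        rw [Measure.volume_eq_prod]
        have hm : Measurable fun z : (ℝ × ℝ) × (ℝ × ℝ) =>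
            F (tgMap α z.1 z.2) * G z.2 * H z.1 :=
          ((hF.comp (measurable_tgMap hα)).mul (hG.comp measurable_snd)).mul
            (hH.comp measurable_fst)
        exact (lintegral_prod _ hm.aemeasurable).symm
    _ = ∫⁻ z : (ℝ × ℝ) × (ℝ × ℝ), H z.1 * G z.2 * F (tgMap α z.1 z.2) := by
        refine lintegral_congr fun z => ?_
        ring

lemma L_swapFG (hα : 0 ≤ α) (F G H : ℝ × ℝ → ℝ≥0∞) (hF : Measurable F)
    (hG : Measurable G) (hH : Measurable H) :
    ∫⁻ z : (ℝ × ℝ) × (ℝ × ℝ), F z.1 * G z.2 * H (sgMap α z.1 z.2) =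
      ∫⁻ z : (ℝ × ℝ) × (ℝ × ℝ), G z.1 * F z.2 * H (sgMap α z.1 z.2) := by
  have hmp : MeasurePreserving (Prod.swap : (ℝ × ℝ) × (ℝ × ℝ) → (ℝ × ℝ) × (ℝ × ℝ))
      volume volume := by
    have h := Measure.measurePreserving_swap (μ := (volume : Measure (ℝ × ℝ)))
      (ν := (volume : Measure (ℝ × ℝ)))
    rwa [← Measure.volume_eq_prod] at h
  have hΦm : Measurable fun z : (ℝ × ℝ) × (ℝ × ℝ) =>
      F z.1 * G z.2 * H (sgMap α z.1 z.2) :=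
    ((hF.comp measurable_fst).mul (hG.comp measurable_snd)).mul
      (hH.comp (measurable_sgMap hα))
  calc ∫⁻ z : (ℝ × ℝ) × (ℝ × ℝ), F z.1 * G z.2 * H (sgMap α z.1 z.2)
      = ∫⁻ z : (ℝ × ℝ) × (ℝ × ℝ), (fun w : (ℝ × ℝ) × (ℝ × ℝ) =>
          F w.1 * G w.2 * H (sgMap α w.1 w.2)) (Prod.swap z) := by
        exact (hmp.lintegral_comp hΦm).symm
    _ = ∫⁻ z : (ℝ × ℝ) × (ℝ × ℝ), G z.1 * F z.2 * H (sgMap α z.1 z.2) := by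
        refine lintegral_congr fun z => ?_
        simp only [Prod.swap]
        rw [sg_comm (p := z.2) (q := z.1)]
        ring

lemma qmp_sg (hα : 0 ≤ α) :
    Measure.QuasiMeasurePreserving
      (fun z : (ℝ × ℝ) × (ℝ × ℝ) => sgMap α z.1 z.2) volume volume := by
  refine ⟨measurable_sgMap hα, ?_⟩
  refine Measure.AbsolutelyContinuous.mk fun N hNm hN0 => ?_
  rw [Measure.map_apply (measurable_sgMap hα) hNm]
  have hmeas : Measurable fun z : (ℝ × ℝ) × (ℝ × ℝ) =>
      N.indicator (1 : ℝ × ℝ → ℝ≥0∞) (sgMap α z.1 z.2) :=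
    (measurable_one.indicator hNm).comp (measurable_sgMap hα)
  have h1 : volume ((fun z : (ℝ × ℝ) × (ℝ × ℝ) => sgMap α z.1 z.2) ⁻¹' N) =
      ∫⁻ z : (ℝ × ℝ) × (ℝ × ℝ), N.indicator 1 (sgMap α z.1 z.2) := by
    rw [← lintegral_indicator_one ((measurable_sgMap hα) hNm)]
    refine lintegral_congr fun z => ?_
    by_cases h : sgMap α z.1 z.2 ∈ N <;>
      simp [Set.indicator_apply, h, Set.mem_preimage]
  rw [h1, Measure.volume_eq_prod, lintegral_prod _ hmeas.aemeasurable,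
    lintegral_lintegral_swap hmeas.aemeasurable]
  have h2 : ∀ q : ℝ × ℝ, ∫⁻ p : ℝ × ℝ, N.indicator (1 : ℝ × ℝ → ℝ≥0∞) (sgMap α p q) = 0 :=
    fun q => by
      rw [lintegral_shear_sg hα q _ (measurable_one.indicator hNm),
        lintegral_indicator_one hNm]
      exact hN0
  simp [h2]

lemma absSet_subset (a b : ℝ) :
    {ν : ℝ | |ν| ∈ Set.Icc a b} ⊆ Set.Icc (-b) b := fun ν hν => abs_le.1 hν.2

lemma absSet_meas (a b : ℝ) : MeasurableSet {ν : ℝ | |ν| ∈ Set.Icc a b} :=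
  continuous_abs.measurable measurableSet_Icc

lemma Uset_meas (k : ℤ) : MeasurableSet (Uset k) := by
  unfold Uset; split <;> exact absSet_meas _ _

lemma Uset_vol_ne_top (k : ℤ) : volume (Uset k) ≠ ⊤ := by
  unfold Uset
  split
  · refine ne_top_of_le_ne_top ?_ (measure_mono (absSet_subset _ _))
    rw [Real.volume_Icc]; exact ENNReal.ofReal_ne_top
  · refine ne_top_of_le_ne_top ?_ (measure_mono (absSet_subset _ _))
    rw [Real.volume_Icc]; exact ENNReal.ofReal_ne_top

lemma Jset_meas (j : ℕ) : MeasurableSet (Jset j) := by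
  cases j with
  | zero => exact measurableSet_Icc
  | succ j => exact absSet_meas _ _

lemma Jset_vol_le (j : ℕ) : volume (Jset j) ≤ ENNReal.ofReal (4 * 2 ^ j) := by
  cases j with
  | zero =>
    show volume (Set.Icc (-2 : ℝ) 2) ≤ _
    rw [Real.volume_Icc]
    exact ENNReal.ofReal_le_ofReal (by norm_num)
  | succ j =>
    refine le_trans (measure_mono (absSet_subset _ _)) ?_
    rw [Real.volume_Icc]
    refine ENNReal.ofReal_le_ofReal ?_
    have : (2:ℝ) ^ (j + 2) - -(2:ℝ) ^ (j + 2) = 4 * 2 ^ (j + 1) := by ring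
    linarith [this.le]

lemma pickmin (u1 u2 u3 v1 v2 v3 : ℝ≥0∞) :
    min (min (min u1 u2 * min v1 v2) (min u3 u2 * min v3 v2)) (min u3 u1 * min v3 v1) ≤
      min (min u1 u2) u3 * min (min v1 v2) v3 := by
  rcases min_cases (min u1 u2) u3 with ⟨eu, _⟩ | ⟨eu, _⟩ <;>
    rcases min_cases (min v1 v2) v3 with ⟨ev, _⟩ | ⟨ev, _⟩ <;> rw [eu, ev]
  · exact le_trans (min_le_left _ _) (min_le_left _ _)
  · rcases min_cases u1 u2 with ⟨e, _⟩ | ⟨e, _⟩ <;> rw [e]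
    · exact le_trans (min_le_right _ _)
        (mul_le_mul' (min_le_right _ _) (min_le_left _ _))
    · exact le_trans (le_trans (min_le_left _ _) (min_le_right _ _))
        (mul_le_mul' (min_le_right _ _) (min_le_left _ _))
  · rcases min_cases v1 v2 with ⟨e, _⟩ | ⟨e, _⟩ <;> rw [e]
    · exact le_trans (min_le_right _ _)
        (mul_le_mul' (min_le_left _ _) (min_le_right _ _))
    · exact le_trans (le_trans (min_le_left _ _) (min_le_right _ _))
        (mul_le_mul' (min_le_left _ _) (min_le_right _ _))
  · exact le_trans (le_trans (min_le_left _ _) (min_le_right _ _))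
      (mul_le_mul' (min_le_left _ _) (min_le_left _ _))

end Statement8Aux4
section Statement8Aux5

open Function

variable {α : ℝ}

lemma Lbound (hα : 0 ≤ α) (F G H : ℝ × ℝ → ℝ≥0∞) (hF : Measurable F)
    (hG : Measurable G) (hH : Measurable H)
    (U1 J1 U2 J2 U3 J3 : Set ℝ)
    (hU1 : MeasurableSet U1) (hJ1 : MeasurableSet J1)
    (hU2 : MeasurableSet U2) (hJ2 : MeasurableSet J2)
    (hU3 : MeasurableSet U3) (hJ3 : MeasurableSet J3)
    (hFs : ∀ p : ℝ × ℝ, F p ≠ 0 → p.1 ∈ U1 ∧ p.2 ∈ J1)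
    (hGs : ∀ q : ℝ × ℝ, G q ≠ 0 → q.1 ∈ U2 ∧ q.2 ∈ J2)
    (hHs : ∀ r : ℝ × ℝ, H r ≠ 0 → r.1 ∈ U3 ∧ r.2 ∈ J3) :
    ∫⁻ z : (ℝ × ℝ) × (ℝ × ℝ), F z.1 * G z.2 * H (sgMap α z.1 z.2) ≤
      ((∫⁻ p, F p ^ (2 : ℝ)) * (∫⁻ p, G p ^ (2 : ℝ)) * (∫⁻ p, H p ^ (2 : ℝ))) ^
          (1 / 2 : ℝ) *
        (min (min (volume U1) (volume U2)) (volume U3) *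
          min (min (volume J1) (volume J2)) (volume J3)) ^ (1 / 2 : ℝ) := by
  set P := (∫⁻ p, F p ^ (2 : ℝ)) * (∫⁻ p, G p ^ (2 : ℝ)) * (∫⁻ p, H p ^ (2 : ℝ)) with hP
  set X12 := min (volume U1) (volume U2) * min (volume J1) (volume J2) with hX12
  set X32 := min (volume U3) (volume U2) * min (volume J3) (volume J2) with hX32
  set X31 := min (volume U3) (volume U1) * min (volume J3) (volume J1) with hX31
  have hsg : ∀ q : ℝ × ℝ, ∀ Φ : ℝ × ℝ → ℝ≥0∞, Measurable Φ →
      ∫⁻ p, Φ (sgMap α p q) = ∫⁻ p, Φ p := fun q Φ hΦ => lintegral_shear_sg hα q Φ hΦ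
  have htg : ∀ q : ℝ × ℝ, ∀ Φ : ℝ × ℝ → ℝ≥0∞, Measurable Φ →
      ∫⁻ p, Φ (tgMap α p q) = ∫⁻ p, Φ p := fun q Φ hΦ => lintegral_shear_tg hα q Φ hΦ
  -- bound via the pair (1,2)
  have b12 : ∫⁻ z : (ℝ × ℝ) × (ℝ × ℝ), F z.1 * G z.2 * H (sgMap α z.1 z.2) ≤
      P ^ (1 / 2 : ℝ) * X12 ^ (1 / 2 : ℝ) := by
    refine main_est F G H hF hG hH U1 J1 U2 J2 hU1 hJ1 hU2 hJ2 hFs hGs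
      (sgMap α) (tgMap α) (measurable_sgMap hα) (measurable_tgMap hα)
      (fun p q => tg_sg p q) hsg ?_
    intro p
    have e : ∀ q : ℝ × ℝ,
        (U1 ×ˢ J1).indicator (1 : ℝ × ℝ → ℝ≥0∞) (tgMap α p q) *
          (U2 ×ˢ J2).indicator 1 q =
        U1.indicator 1 (p.1 - q.1) *
          J1.indicator 1 (p.2 - q.2 - Omega α (p.1 - q.1) q.1) *
          (U2.indicator 1 q.1 * J2.indicator 1 q.2) := by
      intro q
      rw [indProd, indProd]
      show U1.indicator 1 (p.1 - q.1) *
          J1.indicator 1 (p.2 - q.2 - Omega α (p.1 - q.1) q.1) *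
          (U2.indicator 1 q.1 * J2.indicator 1 q.2) = _
      rfl
    rw [lintegral_congr e]
    exact Qsub U1 J1 U2 J2 hU1 hJ1 hU2 hJ2 p.1 p.2 (fun s => Omega α (p.1 - s) s)
      ((measurable_Omega2 hα).comp ((measurable_const.sub measurable_id).prodMk
        measurable_id))
  -- bound via the pair (3,2)
  have b32 : ∫⁻ z : (ℝ × ℝ) × (ℝ × ℝ), F z.1 * G z.2 * H (sgMap α z.1 z.2) ≤
      P ^ (1 / 2 : ℝ) * X32 ^ (1 / 2 : ℝ) := by
    rw [L_transform hα F G H hF hG hH]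
    have h := main_est H G F hH hG hF U3 J3 U2 J2 hU3 hJ3 hU2 hJ2 hHs hGs
      (tgMap α) (sgMap α) (measurable_tgMap hα) (measurable_sgMap hα)
      (fun p q => sg_tg p q) htg ?_
    · refine le_trans h (le_of_eq ?_)
      rw [hP]
      congr 1
      congr 1
      ring
    intro p
    have e : ∀ q : ℝ × ℝ,
        (U3 ×ˢ J3).indicator (1 : ℝ × ℝ → ℝ≥0∞) (sgMap α p q) *
          (U2 ×ˢ J2).indicator 1 q =
        U3.indicator 1 (p.1 + q.1) *
          J3.indicator 1 (p.2 + q.2 + Omega α p.1 q.1) *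
          (U2.indicator 1 q.1 * J2.indicator 1 q.2) := by
      intro q
      rw [indProd, indProd]
      rfl
    rw [lintegral_congr e]
    exact Qadd U3 J3 U2 J2 hU3 hJ3 hU2 hJ2 p.1 p.2 (fun s => Omega α p.1 s)
      ((measurable_Omega2 hα).comp (measurable_const.prodMk measurable_id))
  -- bound via the pair (3,1)
  have b31 : ∫⁻ z : (ℝ × ℝ) × (ℝ × ℝ), F z.1 * G z.2 * H (sgMap α z.1 z.2) ≤
      P ^ (1 / 2 : ℝ) * X31 ^ (1 / 2 : ℝ) := by
    rw [L_swapFG hα F G H hF hG hH, L_transform hα G F H hG hF hH]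
    have h := main_est H F G hH hF hG U3 J3 U1 J1 hU3 hJ3 hU1 hJ1 hHs hFs
      (tgMap α) (sgMap α) (measurable_tgMap hα) (measurable_sgMap hα)
      (fun p q => sg_tg p q) htg ?_
    · refine le_trans h (le_of_eq ?_)
      rw [hP]
      congr 1
      congr 1
      ring
    intro p
    have e : ∀ q : ℝ × ℝ,
        (U3 ×ˢ J3).indicator (1 : ℝ × ℝ → ℝ≥0∞) (sgMap α p q) *
          (U1 ×ˢ J1).indicator 1 q =
        U3.indicator 1 (p.1 + q.1) *
          J3.indicator 1 (p.2 + q.2 + Omega α p.1 q.1) *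
          (U1.indicator 1 q.1 * J1.indicator 1 q.2) := by
      intro q
      rw [indProd, indProd]
      rfl
    rw [lintegral_congr e]
    exact Qadd U3 J3 U1 J1 hU3 hJ3 hU1 hJ1 p.1 p.2 (fun s => Omega α p.1 s)
      ((measurable_Omega2 hα).comp (measurable_const.prodMk measurable_id))
  have hbest : ∫⁻ z : (ℝ × ℝ) × (ℝ × ℝ), F z.1 * G z.2 * H (sgMap α z.1 z.2) ≤
      P ^ (1 / 2 : ℝ) * (min (min X12 X32) X31) ^ (1 / 2 : ℝ) := by
    rcases min_cases (min X12 X32) X31 with ⟨e1, _⟩ | ⟨e1, _⟩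
    · rw [e1]
      rcases min_cases X12 X32 with ⟨e2, _⟩ | ⟨e2, _⟩ <;> rw [e2]
      · exact b12
      · exact b32
    · rw [e1]; exact b31
  refine le_trans hbest (mul_le_mul_right ?_ _)
  exact ENNReal.rpow_le_rpow (pickmin _ _ _ _ _ _) (by norm_num)

end Statement8Aux5
section Statement8Aux6

lemma four_two_pow_half (n : ℕ) :
    ((4 * 2 ^ n : ℝ)) ^ (1 / 2 : ℝ) = 2 * (2 : ℝ) ^ ((n : ℝ) / 2) := by
  have h0 : (0 : ℝ) ≤ 2 * (2 : ℝ) ^ ((n : ℝ) / 2) := by positivity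
  have h1 : (4 * 2 ^ n : ℝ) = (2 * (2 : ℝ) ^ ((n : ℝ) / 2)) ^ (2 : ℕ) := by
    rw [mul_pow, ← Real.rpow_natCast ((2 : ℝ) ^ ((n : ℝ) / 2)) 2,
      ← Real.rpow_mul (by norm_num : (0:ℝ) ≤ 2)]
    norm_num
  rw [h1, ← Real.rpow_natCast (2 * (2 : ℝ) ^ ((n : ℝ) / 2)) 2,
    ← Real.rpow_mul h0]
  norm_num

lemma eLp_two_eq (f : ℝ × ℝ → ℂ) :
    eLpNorm f 2 volume = (∫⁻ p, (‖f p‖₊ : ℝ≥0∞) ^ (2 : ℝ)) ^ (1 / 2 : ℝ) := by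
  rw [eLpNorm_eq_lintegral_rpow_enorm_toReal (by norm_num) (by norm_num)]
  norm_num
  rfl

end Statement8Aux6
/-- Trilinear estimate with the measure of the smallest frequency block. -/
theorem statement8 (α : ℝ) (hα : α ∈ Set.Ioo (1 : ℝ) 2) :
    ∃ C : ℝ, 0 < C ∧
      ∀ (k₁ k₂ k₃ : ℤ) (j₁ j₂ j₃ : ℕ) (f₁ f₂ f₃ : ℝ × ℝ → ℂ),
        MemLp f₁ 2 volume → MemLp f₂ 2 volume → MemLp f₃ 2 volume →
        Function.support f₁ ⊆ Uset k₁ ×ˢ Jset j₁ →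
        Function.support f₂ ⊆ Uset k₂ ×ˢ Jset j₂ →
        Function.support f₃ ⊆ Uset k₃ ×ˢ Jset j₃ →
        ‖Jnt α f₁ f₂ f₃‖ ≤
          C * (min (min (volume (Uset k₁)).toReal (volume (Uset k₂)).toReal)
                (volume (Uset k₃)).toReal) ^ (1 / 2 : ℝ) *
            (2 : ℝ) ^ (((min (min j₁ j₂) j₃ : ℕ) : ℝ) / 2) *
            (L2N f₁ * L2N f₂ * L2N f₃) := by
  have hα0 : (0 : ℝ) ≤ α := le_of_lt (lt_trans zero_lt_one hα.1)
  refine ⟨2, by norm_num, ?_⟩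
  intro k₁ k₂ k₃ j₁ j₂ j₃ f₁ f₂ f₃ hm₁ hm₂ hm₃ hs₁ hs₂ hs₃
  have hU1 := Uset_meas k₁
  have hU2 := Uset_meas k₂
  have hU3 := Uset_meas k₃
  have hJ1 := Jset_meas j₁
  have hJ2 := Jset_meas j₂
  have hJ3 := Jset_meas j₃
  -- measurable representatives
  set g₁ : ℝ × ℝ → ℂ := (Uset k₁ ×ˢ Jset j₁).indicator (hm₁.1.mk f₁) with hg₁def
  set g₂ : ℝ × ℝ → ℂ := (Uset k₂ ×ˢ Jset j₂).indicator (hm₂.1.mk f₂) with hg₂def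
  set g₃ : ℝ × ℝ → ℂ := (Uset k₃ ×ˢ Jset j₃).indicator (hm₃.1.mk f₃) with hg₃def
  have hg₁m : Measurable g₁ :=
    (hm₁.1.stronglyMeasurable_mk.measurable).indicator (hU1.prod hJ1)
  have hg₂m : Measurable g₂ :=
    (hm₂.1.stronglyMeasurable_mk.measurable).indicator (hU2.prod hJ2)
  have hg₃m : Measurable g₃ :=
    (hm₃.1.stronglyMeasurable_mk.measurable).indicator (hU3.prod hJ3)
  have hgae : ∀ (f : ℝ × ℝ → ℂ) (hm : MemLp f 2 volume) (S : Set (ℝ × ℝ)),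
      Function.support f ⊆ S → f =ᵐ[volume] S.indicator (hm.1.mk f) := by
    intro f hm S hs
    have h0 : f = S.indicator f := (Set.indicator_eq_self.mpr hs).symm
    filter_upwards [hm.1.ae_eq_mk] with x hx
    conv_lhs => rw [h0]
    by_cases h : x ∈ S
    · simp [Set.indicator_of_mem h, hx]
    · simp [Set.indicator_of_notMem h]
  have hg₁ : f₁ =ᵐ[volume] g₁ := hgae f₁ hm₁ _ hs₁
  have hg₂ : f₂ =ᵐ[volume] g₂ := hgae f₂ hm₂ _ hs₂
  have hg₃ : f₃ =ᵐ[volume] g₃ := hgae f₃ hm₃ _ hs₃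
  have hg₁s : ∀ p : ℝ × ℝ, g₁ p ≠ 0 → p.1 ∈ Uset k₁ ∧ p.2 ∈ Jset j₁ := by
    intro p hp
    by_contra h
    refine hp (Set.indicator_of_notMem (fun hmem => h ?_) _)
    exact ⟨hmem.1, hmem.2⟩
  have hg₂s : ∀ p : ℝ × ℝ, g₂ p ≠ 0 → p.1 ∈ Uset k₂ ∧ p.2 ∈ Jset j₂ := by
    intro p hp
    by_contra h
    refine hp (Set.indicator_of_notMem (fun hmem => h ?_) _)
    exact ⟨hmem.1, hmem.2⟩
  have hg₃s : ∀ p : ℝ × ℝ, g₃ p ≠ 0 → p.1 ∈ Uset k₃ ∧ p.2 ∈ Jset j₃ := by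
    intro p hp
    by_contra h
    refine hp (Set.indicator_of_notMem (fun hmem => h ?_) _)
    exact ⟨hmem.1, hmem.2⟩
  -- the trilinear form only depends on the a.e. class
  have hJnt_def : ∀ u v w : ℝ × ℝ → ℂ,
      Jnt α u v w = ∫ z : (ℝ × ℝ) × (ℝ × ℝ), u z.1 * v z.2 * w (sgMap α z.1 z.2) :=
    fun u v w => rfl
  have hqf : Measure.QuasiMeasurePreserving (Prod.fst : (ℝ × ℝ) × (ℝ × ℝ) → ℝ × ℝ)
      volume volume := by
    rw [Measure.volume_eq_prod]; exact Measure.quasiMeasurePreserving_fst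
  have hqs : Measure.QuasiMeasurePreserving (Prod.snd : (ℝ × ℝ) × (ℝ × ℝ) → ℝ × ℝ)
      volume volume := by
    rw [Measure.volume_eq_prod]; exact Measure.quasiMeasurePreserving_snd
  have hJeq : Jnt α f₁ f₂ f₃ = Jnt α g₁ g₂ g₃ := by
    rw [hJnt_def, hJnt_def]
    refine integral_congr_ae ?_
    have a1 := hqf.ae_eq_comp hg₁
    have a2 := hqs.ae_eq_comp hg₂
    have a3 := (qmp_sg hα0).ae_eq_comp hg₃
    filter_upwards [a1, a2, a3] with z e1 e2 e3
    simp only [Function.comp_apply] at e1 e2 e3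
    rw [e1, e2, e3]
  -- pass to nonnegative integrands
  have hFm : Measurable fun p : ℝ × ℝ => (‖g₁ p‖₊ : ℝ≥0∞) :=
    hg₁m.nnnorm.coe_nnreal_ennreal
  have hGm : Measurable fun p : ℝ × ℝ => (‖g₂ p‖₊ : ℝ≥0∞) :=
    hg₂m.nnnorm.coe_nnreal_ennreal
  have hHm : Measurable fun p : ℝ × ℝ => (‖g₃ p‖₊ : ℝ≥0∞) :=
    hg₃m.nnnorm.coe_nnreal_ennreal
  set L : ℝ≥0∞ := ∫⁻ z : (ℝ × ℝ) × (ℝ × ℝ),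
    (‖g₁ z.1‖₊ : ℝ≥0∞) * (‖g₂ z.2‖₊ : ℝ≥0∞) * (‖g₃ (sgMap α z.1 z.2)‖₊ : ℝ≥0∞)
    with hLdef
  have hnorm : ‖Jnt α g₁ g₂ g₃‖ ≤ L.toReal := by
    rw [hJnt_def]
    refine le_trans (norm_integral_le_lintegral_norm _) ?_
    refine le_of_eq (congrArg ENNReal.toReal ?_)
    refine lintegral_congr fun z => ?_
    rw [norm_mul, norm_mul,
      ENNReal.ofReal_mul (mul_nonneg (norm_nonneg _) (norm_nonneg _)),
      ENNReal.ofReal_mul (norm_nonneg _),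
      ofReal_norm, ofReal_norm, ofReal_norm, enorm_eq_nnnorm, enorm_eq_nnnorm,
        enorm_eq_nnnorm]
  -- the main estimate
  have hmain := Lbound hα0
    (fun p : ℝ × ℝ => (‖g₁ p‖₊ : ℝ≥0∞))
    (fun p : ℝ × ℝ => (‖g₂ p‖₊ : ℝ≥0∞))
    (fun p : ℝ × ℝ => (‖g₃ p‖₊ : ℝ≥0∞)) hFm hGm hHm
    (Uset k₁) (Jset j₁) (Uset k₂) (Jset j₂) (Uset k₃) (Jset j₃)
    hU1 hJ1 hU2 hJ2 hU3 hJ3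
    (fun p hp => hg₁s p (by simpa using hp))
    (fun p hp => hg₂s p (by simpa using hp))
    (fun p hp => hg₃s p (by simpa using hp))
  -- abbreviations
  set minU := min (min (volume (Uset k₁)) (volume (Uset k₂))) (volume (Uset k₃))
    with hminUdef
  set n := min (min j₁ j₂) j₃ with hndef
  have h12 : (0 : ℝ) ≤ 1 / 2 := by norm_num
  have hminJ : min (min (volume (Jset j₁)) (volume (Jset j₂))) (volume (Jset j₃)) ≤
      ENNReal.ofReal (4 * 2 ^ n) := by
    have hn3 : n = j₁ ∨ n = j₂ ∨ n = j₃ := by omega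
    rcases hn3 with h | h | h
    · refine le_trans (le_trans (min_le_left _ _) (min_le_left _ _)) ?_
      rw [h]; exact Jset_vol_le j₁
    · refine le_trans (le_trans (min_le_left _ _) (min_le_right _ _)) ?_
      rw [h]; exact Jset_vol_le j₂
    · refine le_trans (min_le_right _ _) ?_
      rw [h]; exact Jset_vol_le j₃
  have hP1 : ((∫⁻ p : ℝ × ℝ, (‖g₁ p‖₊ : ℝ≥0∞) ^ (2 : ℝ)) *
        (∫⁻ p : ℝ × ℝ, (‖g₂ p‖₊ : ℝ≥0∞) ^ (2 : ℝ)) *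
        (∫⁻ p : ℝ × ℝ, (‖g₃ p‖₊ : ℝ≥0∞) ^ (2 : ℝ))) ^ (1 / 2 : ℝ) =
      eLpNorm f₁ 2 volume * eLpNorm f₂ 2 volume * eLpNorm f₃ 2 volume := by
    rw [ENNReal.mul_rpow_of_nonneg _ _ h12, ENNReal.mul_rpow_of_nonneg _ _ h12,
      ← eLp_two_eq g₁, ← eLp_two_eq g₂, ← eLp_two_eq g₃,
      ← eLpNorm_congr_ae hg₁, ← eLpNorm_congr_ae hg₂, ← eLpNorm_congr_ae hg₃]
  have hL_E : L ≤ (eLpNorm f₁ 2 volume * eLpNorm f₂ 2 volume * eLpNorm f₃ 2 volume) *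
      (minU ^ (1 / 2 : ℝ) * (ENNReal.ofReal (4 * 2 ^ n)) ^ (1 / 2 : ℝ)) := by
    refine le_trans hmain ?_
    refine le_trans (mul_le_mul_right
      (ENNReal.rpow_le_rpow (mul_le_mul_right hminJ _) h12) _) ?_
    rw [hP1, ENNReal.mul_rpow_of_nonneg _ _ h12]
  have hfin1 : eLpNorm f₁ 2 volume ≠ ⊤ := hm₁.2.ne
  have hfin2 : eLpNorm f₂ 2 volume ≠ ⊤ := hm₂.2.ne
  have hfin3 : eLpNorm f₃ 2 volume ≠ ⊤ := hm₃.2.ne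
  have hminU_ne : minU ≠ ⊤ := ne_top_of_le_ne_top (Uset_vol_ne_top k₃) (min_le_right _ _)
  have hEne : (eLpNorm f₁ 2 volume * eLpNorm f₂ 2 volume * eLpNorm f₃ 2 volume) *
      (minU ^ (1 / 2 : ℝ) * (ENNReal.ofReal (4 * 2 ^ n)) ^ (1 / 2 : ℝ)) ≠ ⊤ :=
    ENNReal.mul_ne_top (ENNReal.mul_ne_top (ENNReal.mul_ne_top hfin1 hfin2) hfin3)
      (ENNReal.mul_ne_top (ENNReal.rpow_ne_top_of_nonneg h12 hminU_ne)
        (ENNReal.rpow_ne_top_of_nonneg h12 ENNReal.ofReal_ne_top))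
  have hminU_toReal : minU.toReal =
      min (min (volume (Uset k₁)).toReal (volume (Uset k₂)).toReal)
        (volume (Uset k₃)).toReal := by
    rw [hminUdef, ENNReal.toReal_min
      (ne_top_of_le_ne_top (Uset_vol_ne_top k₂) (min_le_right _ _)) (Uset_vol_ne_top k₃),
      ENNReal.toReal_min (Uset_vol_ne_top k₁) (Uset_vol_ne_top k₂)]
  calc ‖Jnt α f₁ f₂ f₃‖ = ‖Jnt α g₁ g₂ g₃‖ := by rw [hJeq]
    _ ≤ L.toReal := hnorm
    _ ≤ ((eLpNorm f₁ 2 volume * eLpNorm f₂ 2 volume * eLpNorm f₃ 2 volume) *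
        (minU ^ (1 / 2 : ℝ) * (ENNReal.ofReal (4 * 2 ^ n)) ^ (1 / 2 : ℝ))).toReal :=
      ENNReal.toReal_mono hEne hL_E
    _ = (L2N f₁ * L2N f₂ * L2N f₃) *
        ((minU.toReal) ^ (1 / 2 : ℝ) * (2 * (2 : ℝ) ^ ((n : ℝ) / 2))) := by
      rw [ENNReal.toReal_mul, ENNReal.toReal_mul, ENNReal.toReal_mul,
        ENNReal.toReal_mul]
      congr 1
      congr 1
      · exact (ENNReal.toReal_rpow _ _).symm
      · rw [← ENNReal.toReal_rpow, ENNReal.toReal_ofReal (by positivity),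
          four_two_pow_half]
    _ = 2 * (min (min (volume (Uset k₁)).toReal (volume (Uset k₂)).toReal)
          (volume (Uset k₃)).toReal) ^ (1 / 2 : ℝ) *
        (2 : ℝ) ^ ((n : ℝ) / 2) * (L2N f₁ * L2N f₂ * L2N f₃) := by
      rw [← hminU_toReal]
      ring
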